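/- Let k and d be positive integers with d ≥ 3. Let T be a tree with maximum degree at most d, and let A ⊆ V(T). If |A| ≥ k·(d² − d + 1), then T contains k pairwise vertex-disjoint subtrees T₁,…,T_k such that each T_i contains at least d vertices of A. -/

import Mathlib

open SimpleGraph Finset

namespace Stmt7Aux

set_option linter.unusedSectionVars false

variable {V : Type} [DecidableEq V] {G : SimpleGraph V}

noncomputable def pth (hT : G.IsTree) (u v : V) : G.Walk u v :=
  (hT.existsUnique_path u v).choose

lemma pth_isPath (hT : G.IsTree) (u v : V) : (pth hT u v).IsPath :=
  (hT.existsUnique_path u v).choose_spec.1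

lemma pth_unique (hT : G.IsTree) {u v : V} (p : G.Walk u v) (hp : p.IsPath) :
    p = pth hT u v :=
  (hT.existsUnique_path u v).choose_spec.2 p hp

noncomputable def supp (hT : G.IsTree) (u v : V) : List V := (pth hT u v).support

lemma start_mem_supp (hT : G.IsTree) (u v : V) : u ∈ supp hT u v :=
  Walk.start_mem_support _

lemma end_mem_supp (hT : G.IsTree) (u v : V) : v ∈ supp hT u v :=
  Walk.end_mem_support _

lemma mem_supp_comm (hT : G.IsTree) {u v x : V} (h : x ∈ supp hT u v) :
    x ∈ supp hT v u := by
  have hrev : (pth hT u v).reverse = pth hT v u :=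
    pth_unique hT _ ((pth_isPath hT u v).reverse)
  unfold supp at *
  rw [← hrev, Walk.support_reverse, List.mem_reverse]
  exact h

lemma supp_split (hT : G.IsTree) {u v y : V} (h : y ∈ supp hT u v) :
    pth hT u v = (pth hT u y).append (pth hT y v) := by
  have h1 : (pth hT u v).takeUntil y h = pth hT u y :=
    pth_unique hT _ ((pth_isPath hT u v).takeUntil h)
  have h2 : (pth hT u v).dropUntil y h = pth hT y v :=
    pth_unique hT _ ((pth_isPath hT u v).dropUntil h)
  rw [← h1, ← h2]
  exact (Walk.take_spec _ h).symm

lemma supp_left_sub (hT : G.IsTree) {u v y : V} (h : y ∈ supp hT u v) :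
    supp hT u y ⊆ supp hT u v := by
  unfold supp
  rw [supp_split hT h]
  exact fun x hx => Walk.subset_support_append_left _ _ hx

lemma supp_right_sub (hT : G.IsTree) {u v y : V} (h : y ∈ supp hT u v) :
    supp hT y v ⊆ supp hT u v := by
  unfold supp
  rw [supp_split hT h]
  exact fun x hx => Walk.subset_support_append_right _ _ hx

lemma supp_sub_union (hT : G.IsTree) (u y v : V) {x : V} (hx : x ∈ supp hT u v) :
    x ∈ supp hT u y ∨ x ∈ supp hT y v := by
  have hb : ((pth hT u y).append (pth hT y v)).bypass = pth hT u v :=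
    pth_unique hT _ (Walk.bypass_isPath _)
  have := Walk.support_bypass_subset ((pth hT u y).append (pth hT y v))
  rw [hb] at this
  have hx2 := this hx
  rw [Walk.mem_support_append_iff] at hx2
  exact hx2

lemma len_add (hT : G.IsTree) {u v y : V} (h : y ∈ supp hT u v) :
    (pth hT u y).length + (pth hT y v).length = (pth hT u v).length := by
  rw [supp_split hT h, Walk.length_append]

lemma len_comm (hT : G.IsTree) (u v : V) :
    (pth hT u v).length = (pth hT v u).length := by
  have hrev : (pth hT u v).reverse = pth hT v u :=
    pth_unique hT _ ((pth_isPath hT u v).reverse)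
  rw [← hrev, Walk.length_reverse]

lemma supp_antisymm (hT : G.IsTree) {u v y : V}
    (h1 : y ∈ supp hT u v) (h2 : v ∈ supp hT u y) : v = y := by
  have e1 := len_add hT h1
  have e2 := len_add hT h2
  have e3 := len_comm hT v y
  have hz : (pth hT y v).length = 0 := by omega
  exact (Walk.eq_of_length_eq_zero hz).symm

lemma mem_supp_of_append (hT : G.IsTree) {u v w y : V}
    (p1 : G.Walk u v) (p2 : G.Walk v w) (hp : (p1.append p2).IsPath)
    (hy : y ∈ p2.support) : v ∈ supp hT u y := by
  have ht : (p1.append (p2.takeUntil y hy)).IsPath := by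
    rw [Walk.isPath_def, Walk.support_append]
    have hnd := hp.support_nodup
    rw [Walk.support_append] at hnd
    have h3 := Walk.support_append (p2.takeUntil y hy) (p2.dropUntil y hy)
    rw [p2.take_spec hy] at h3
    have htail : p2.support.tail
        = (p2.takeUntil y hy).support.tail ++ (p2.dropUntil y hy).support.tail := by
      rw [h3, List.tail_append_of_ne_nil (Walk.support_ne_nil _)]
    rw [htail, ← List.append_assoc] at hnd
    exact hnd.sublist (List.sublist_append_left _ _)
  have heq := pth_unique hT _ ht
  unfold supp
  rw [← heq, Walk.mem_support_append_iff]
  exact Or.inl p1.end_mem_support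

/-- `u` lies in the set of descendants of `v` (inside `S`, rooted at `a`). -/
noncomputable def desc (hT : G.IsTree) (a v : V) (S : Finset V) : Finset V :=
  S.filter (fun u => v ∈ supp hT a u)

lemma mem_desc {hT : G.IsTree} {a v u : V} {S : Finset V} :
    u ∈ desc hT a v S ↔ u ∈ S ∧ v ∈ supp hT a u := by
  simp [desc]

/-- A vertex subset closed under taking paths between its elements. -/
def Good (hT : G.IsTree) (S : Finset V) : Prop :=
  ∀ u ∈ S, ∀ v ∈ S, ∀ y ∈ supp hT u v, y ∈ S

lemma desc_root (hT : G.IsTree) (a : V) (S : Finset V) : desc hT a a S = S := by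
  ext u; simp [mem_desc, start_mem_supp]

lemma good_desc (hT : G.IsTree) {a v : V} {S : Finset V} (hg : Good hT S) : Good hT (desc hT a v S) := by
  intro u hu w hw y hy
  rw [mem_desc] at hu hw ⊢
  refine ⟨hg u hu.1 w hw.1 y hy, ?_⟩
  rcases supp_sub_union hT u v w hy with h | h
  · have h' : y ∈ supp hT v u := mem_supp_comm hT h
    refine mem_supp_of_append hT (pth hT a v) (pth hT v u) ?_ h'
    rw [← supp_split hT hu.2]
    exact pth_isPath hT a u
  · refine mem_supp_of_append hT (pth hT a v) (pth hT v w) ?_ h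
    rw [← supp_split hT hw.2]
    exact pth_isPath hT a w

lemma good_sdiff_desc (hT : G.IsTree) {a v : V} {S : Finset V} (hg : Good hT S) :
    Good hT (S \ desc hT a v S) := by
  intro u hu w hw y hy
  rw [mem_sdiff] at hu hw ⊢
  have hyS : y ∈ S := hg u hu.1 w hw.1 y hy
  refine ⟨hyS, fun hyC => ?_⟩
  rw [mem_desc] at hyC
  rcases supp_sub_union hT u a w hy with h | h
  · have h' : y ∈ supp hT a u := mem_supp_comm hT h
    exact hu.2 (mem_desc.mpr ⟨hu.1, supp_left_sub hT h' hyC.2⟩)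
  · exact hw.2 (mem_desc.mpr ⟨hw.1, supp_left_sub hT h hyC.2⟩)

lemma sq_arith {d : ℕ} (hd : 1 ≤ d) : d * (d - 1) + d = d ^ 2 := by
  rcases Nat.exists_eq_add_of_le hd with ⟨e, rfl⟩
  ring_nf
  simp [pow_two]
  ring

lemma d_le_M {d : ℕ} (hd : 1 ≤ d) : d ≤ d ^ 2 - d + 1 := by
  have h1 := sq_arith hd
  have h2 : d - 1 ≤ d * (d - 1) := Nat.le_mul_of_pos_left _ (by omega)
  omega

lemma extract [Fintype V] (hT : G.IsTree) [DecidableRel G.Adj]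
    {d : ℕ} (hd : 3 ≤ d) (hdeg : ∀ v : V, G.degree v ≤ d)
    {S B : Finset V} (hBS : B ⊆ S) (hg : Good hT S) (hB : d ≤ B.card) :
    ∃ C : Finset V, C ⊆ S ∧ C.Nonempty ∧ Good hT C ∧ Good hT (S \ C) ∧
      d ≤ (C ∩ B).card ∧ (C ∩ B).card ≤ d ^ 2 - d + 1 := by
  obtain ⟨a, haB⟩ := Finset.card_pos.mp (by omega : 0 < B.card)
  have haS : a ∈ S := hBS haB
  set Cand : Finset V := S.filter (fun v => d ≤ ((desc hT a v S) ∩ B).card) with hCand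
  have hCandne : Cand.Nonempty := by
    refine ⟨a, ?_⟩
    rw [hCand, mem_filter, desc_root, Finset.inter_eq_right.mpr hBS]
    exact ⟨haS, hB⟩
  obtain ⟨v, hvCand, hvmin⟩ := Finset.exists_min_image Cand
    (fun v => (desc hT a v S).card) hCandne
  rw [mem_filter] at hvCand
  obtain ⟨hvS, hvd⟩ := hvCand
  set C : Finset V := desc hT a v S with hC
  have hCS : C ⊆ S := Finset.filter_subset _ _
  have hvC : v ∈ C := mem_desc.mpr ⟨hvS, end_mem_supp hT a v⟩
  refine ⟨C, hCS, ⟨v, hvC⟩, good_desc hT hg, good_sdiff_desc hT hg, hvd, ?_⟩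
  -- upper bound via children
  set children : Finset V := (G.neighborFinset v ∩ S).filter (fun c => v ∈ supp hT a c)
    with hch
  have hchild_lt : ∀ c ∈ children, ((desc hT a c S) ∩ B).card < d := by
    intro c hc
    rw [hch, mem_filter, Finset.mem_inter, mem_neighborFinset] at hc
    obtain ⟨⟨hadj, hcS⟩, hvac⟩ := hc
    have hsub : desc hT a c S ⊆ C := by
      intro u hu
      rw [mem_desc] at hu ⊢
      exact ⟨hu.1, supp_left_sub hT hu.2 hvac⟩
    have hvnot : v ∉ desc hT a c S := by
      intro hvd'
      rw [mem_desc] at hvd'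
      exact (hadj.ne) (supp_antisymm hT hvd'.2 hvac)
    have hss : desc hT a c S ⊂ C := ⟨hsub, fun h => hvnot (h hvC)⟩
    by_contra hge
    push_neg at hge
    have : c ∈ Cand := by
      rw [hCand, mem_filter]; exact ⟨hcS, hge⟩
    have := hvmin c this
    have := Finset.card_lt_card hss
    omega
  have hcover : C ∩ B ⊆ insert v (children.biUnion (fun c => (desc hT a c S) ∩ B)) := by
    intro u hu
    rw [Finset.mem_inter] at hu
    obtain ⟨huC, huB⟩ := hu
    rw [mem_desc] at huC
    obtain ⟨huS, hvau⟩ := huC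
    by_cases huv : u = v
    · subst huv; exact Finset.mem_insert_self _ _
    · refine Finset.mem_insert_of_mem ?_
      have hnn : ¬ (pth hT v u).Nil := Walk.not_nil_of_ne (Ne.symm huv)
      obtain ⟨c, hadj, q, heq⟩ := Walk.not_nil_iff.mp hnn
      have hcsupp : c ∈ supp hT v u := by
        unfold supp; rw [heq]; simp
      have happ : ((pth hT a v).append (pth hT v u)).IsPath := by
        rw [← supp_split hT hvau]; exact pth_isPath hT a u
      have hvac : v ∈ supp hT a c :=
        mem_supp_of_append hT (pth hT a v) (pth hT v u) happ hcsupp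
      have hcS : c ∈ S := hg v hvS u huS c hcsupp
      have hcchild : c ∈ children := by
        rw [hch, mem_filter, Finset.mem_inter, mem_neighborFinset]
        exact ⟨⟨hadj, hcS⟩, hvac⟩
      refine Finset.mem_biUnion.mpr ⟨c, hcchild, ?_⟩
      rw [Finset.mem_inter, mem_desc]
      exact ⟨⟨huS, supp_right_sub hT hvau hcsupp⟩, huB⟩
  have hcard1 : (C ∩ B).card ≤ 1 + children.card * (d - 1) := by
    calc (C ∩ B).card ≤ (insert v (children.biUnion (fun c => (desc hT a c S) ∩ B))).card :=
          Finset.card_le_card hcover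
      _ ≤ 1 + (children.biUnion (fun c => (desc hT a c S) ∩ B)).card := by
          rw [add_comm]; exact Finset.card_insert_le _ _
      _ ≤ 1 + ∑ c ∈ children, ((desc hT a c S) ∩ B).card := by
          exact Nat.add_le_add_left (Finset.card_biUnion_le) _
      _ ≤ 1 + ∑ c ∈ children, (d - 1) := by
          refine Nat.add_le_add_left (Finset.sum_le_sum fun c hc => ?_) _
          have := hchild_lt c hc; omega
      _ = 1 + children.card * (d - 1) := by rw [Finset.sum_const, smul_eq_mul]
  have hchd : children.card ≤ d := by
    calc children.card ≤ (G.neighborFinset v).card :=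
          Finset.card_le_card (fun c hc => (Finset.mem_inter.mp (Finset.mem_filter.mp hc).1).1)
      _ = G.degree v := rfl
      _ ≤ d := hdeg v
  have harith := sq_arith (by omega : 1 ≤ d)
  have : children.card * (d - 1) ≤ d * (d - 1) := Nat.mul_le_mul_right _ hchd
  omega

lemma rec_lemma [Fintype V] (hT : G.IsTree) [DecidableRel G.Adj]
    {d : ℕ} (hd : 3 ≤ d) (hdeg : ∀ v : V, G.degree v ≤ d) :
    ∀ (k : ℕ) (S B : Finset V), B ⊆ S → Good hT S →
      k * (d ^ 2 - d + 1) ≤ B.card →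
      ∃ f : Fin k → Finset V, (∀ i, f i ⊆ S) ∧ (∀ i, (f i).Nonempty) ∧
        (∀ i, Good hT (f i)) ∧ (∀ i, d ≤ ((f i) ∩ B).card) ∧
        (∀ i j, i ≠ j → Disjoint (f i) (f j)) := by
  intro k
  induction k with
  | zero =>
    intro S B _ _ _
    exact ⟨fun i => i.elim0, fun i => i.elim0, fun i => i.elim0, fun i => i.elim0,
      fun i => i.elim0, fun i => i.elim0⟩
  | succ k ih =>
    intro S B hBS hg hcard
    have hM : d ≤ d ^ 2 - d + 1 := d_le_M (by omega)
    have hmul : (k + 1) * (d ^ 2 - d + 1) = k * (d ^ 2 - d + 1) + (d ^ 2 - d + 1) := by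
      ring
    have hBd : d ≤ B.card := by omega
    obtain ⟨C, hCS, hCne, hCgood, hSCgood, hCd, hCub⟩ := extract hT hd hdeg hBS hg hBd
    have hBC : (B \ C) ⊆ S \ C := Finset.sdiff_subset_sdiff hBS (le_refl _)
    have hinter : (B \ C).card + (B ∩ C).card = B.card :=
      Finset.card_sdiff_add_card_inter B C
    have hBCcap : (B ∩ C).card ≤ d ^ 2 - d + 1 := by
      rw [Finset.inter_comm]; exact hCub
    have hcard' : k * (d ^ 2 - d + 1) ≤ (B \ C).card := by omega
    obtain ⟨g, hg1, hg2, hg3, hg4, hg5⟩ := ih (S \ C) (B \ C) hBC hSCgood hcard'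
    refine ⟨Fin.cons C g, ?_, ?_, ?_, ?_, ?_⟩
    · intro i
      induction i using Fin.cases with
      | zero => simpa using hCS
      | succ j => simpa using (hg1 j).trans (Finset.sdiff_subset)
    · intro i
      induction i using Fin.cases with
      | zero => simpa using hCne
      | succ j => simpa using hg2 j
    · intro i
      induction i using Fin.cases with
      | zero => simpa using hCgood
      | succ j => simpa using hg3 j
    · intro i
      induction i using Fin.cases with
      | zero => simpa using hCd
      | succ j =>
        simp only [Fin.cons_succ]
        calc d ≤ ((g j) ∩ (B \ C)).card := hg4 j
          _ ≤ ((g j) ∩ B).card :=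
            Finset.card_le_card (Finset.inter_subset_inter (le_refl _)
              (Finset.sdiff_subset))
    · intro i j hij
      induction i using Fin.cases with
      | zero =>
        induction j using Fin.cases with
        | zero => exact absurd rfl hij
        | succ j' =>
          simp only [Fin.cons_zero, Fin.cons_succ]
          exact ((Finset.sdiff_disjoint.mono_left (hg1 j')).symm : Disjoint C (g j'))
      | succ i' =>
        induction j using Fin.cases with
        | zero =>
          simp only [Fin.cons_zero, Fin.cons_succ]
          exact (Finset.sdiff_disjoint.mono_left (hg1 i'))
        | succ j' =>
          simp only [Fin.cons_succ]
          exact hg5 i' j' (fun h => hij (by rw [h]))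

lemma reachable_induce {s : Set V} :
    ∀ {u w : V} (p : G.Walk u w) (h : ∀ x ∈ p.support, x ∈ s),
      (G.induce s).Reachable ⟨u, h u p.start_mem_support⟩ ⟨w, h w p.end_mem_support⟩ := by
  intro u w p
  induction p with
  | nil => intro h; exact Reachable.refl _
  | @cons u b w hadj q ihq =>
    intro h
    have hb : ∀ x ∈ q.support, x ∈ s := fun x hx => h x (by simp [hx])
    have h1 : (G.induce s).Adj ⟨u, h u (Walk.start_mem_support _)⟩
        ⟨b, hb b q.start_mem_support⟩ := by
      simpa using hadj
    exact (h1.reachable).trans (ihq hb)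

lemma good_connected (hT : G.IsTree) {S : Finset V} (hg : Good hT S)
    (hne : S.Nonempty) : (G.induce (S : Set V)).Connected := by
  rw [connected_iff]
  constructor
  · rintro ⟨u, hu⟩ ⟨w, hw⟩
    have hu' : u ∈ S := hu
    have hw' : w ∈ S := hw
    have hsupp : ∀ x ∈ (pth hT u w).support, x ∈ (S : Set V) := by
      intro x hx
      exact_mod_cast hg u hu' w hw' x hx
    exact reachable_induce (pth hT u w) hsupp
  · obtain ⟨x, hx⟩ := hne
    exact ⟨⟨x, hx⟩⟩

end Stmt7Aux

/-- Let `k, d` be positive integers with `d ≥ 3`, let `T` be a finite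
tree with maximum degree at most `d`, and let `A ⊆ V(T)`.  If `|A| ≥ k(d² − d + 1)`,
then `T` contains `k` pairwise vertex-disjoint subtrees (connected subgraphs), each
containing at least `d` vertices of `A`. -/
theorem stmt7 {V : Type} [Fintype V] [DecidableEq V]
    (k d : ℕ) (hk : 0 < k) (hd : 3 ≤ d)
    (G : SimpleGraph V) [DecidableRel G.Adj]
    (hT : G.IsTree) (hdeg : ∀ v : V, G.degree v ≤ d)
    (A : Finset V) (hA : k * (d ^ 2 - d + 1) ≤ A.card) :
    ∃ T : Fin k → Finset V,
      (∀ i, (G.induce ((T i : Finset V) : Set V)).Connected) ∧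
      (∀ i, d ≤ ((T i) ∩ A).card) ∧
      (∀ i j, i ≠ j → Disjoint (T i) (T j)) := by
  have hgood : Stmt7Aux.Good hT (Finset.univ : Finset V) := by
    intro u _ v _ y _; exact Finset.mem_univ y
  obtain ⟨f, _, hne, hgoodf, hcap, hdisj⟩ :=
    Stmt7Aux.rec_lemma hT hd hdeg k Finset.univ A (Finset.subset_univ A) hgood hA
  exact ⟨f, fun i => Stmt7Aux.good_connected hT (hgoodf i) (hne i), hcap, hdisj⟩
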